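/- Let M > 0 and let ξ be a configuration all of whose radii are at most M. Let ρ > 0, let π be a path starting at 0 whose ρ-skeleton construction produces the times t_0 < t_1 < … < t_k with k ≥ 1, and let γ^1, …, γ^k be the sub-paths obtained by cutting the arc-length parametrized curve π at each t_i and discarding the part of π after time t_k (so γ^j consists of the portion of π between times t_{j−1} and t_j). Then τ̃(π;ξ) ≥ Σ_{j=1}^k τ̃(γ^j;ξ) − 2Mk. -/

import Mathlib

open MeasureTheory Set

noncomputable section

/-- Euclidean space `ℝ^d`. -/
abbrev Euc (d : ℕ) : Type := EuclideanSpace ℝ (Fin d)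

/-- A configuration: a locally finite collection of open balls of `ℝ^d`, encoded by its
radius function `radius : ℝ^d → [0,∞)`, where `radius c > 0` iff `c` is the center of a
ball of the configuration (each center carries a unique radius, so a configuration is the
same as a locally finite subset of `ℝ^d × (0,∞)` whose first coordinates are distinct).
Local finiteness in `ℝ^d × (0,∞)`: every bounded region of `ℝ^d` contains finitely many
centers of radius at least `ε`, for every `ε > 0`. -/
structure Config (d : ℕ) where
  radius : Euc d → ℝ
  radius_nonneg : ∀ c, 0 ≤ radius c
  locFin : ∀ s : Set (Euc d), Bornology.IsBounded s →
    ∀ ε : ℝ, 0 < ε → {c | c ∈ s ∧ ε ≤ radius c}.Finite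

namespace Config

/-- `Σ(ξ)`: the union of the open balls of the configuration. -/
def sigma {d : ℕ} (ξ : Config d) : Set (Euc d) :=
  ⋃ c, Metric.ball c (ξ.radius c)

/-- The restriction of a configuration to a subset `S` of its centers. -/
def restrict {d : ℕ} (ξ : Config d) (S : Set (Euc d)) : Config d where
  radius := S.indicator ξ.radius
  radius_nonneg c := Set.indicator_nonneg (fun a _ => ξ.radius_nonneg a) c
  locFin s hs ε hε := by
    refine (ξ.locFin s hs ε hε).subset ?_
    rintro c ⟨h1, h2⟩
    refine ⟨h1, ?_⟩
    by_cases h : c ∈ S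
    · rwa [Set.indicator_of_mem h] at h2
    · rw [Set.indicator_of_notMem h] at h2; linarith

/-- The configuration keeping only the balls of radius `> θ`. -/
def threshold {d : ℕ} (ξ : Config d) (θ : ℝ) : Config d where
  radius c := if θ < ξ.radius c then ξ.radius c else 0
  radius_nonneg c := by
    split
    · exact ξ.radius_nonneg c
    · exact le_rfl
  locFin s hs ε hε := by
    refine (ξ.locFin s hs ε hε).subset ?_
    rintro c ⟨h1, h2⟩
    refine ⟨h1, ?_⟩
    split_ifs at h2 with h
    · exact h2
    · linarith

end Config

variable {d : ℕ}

/-- `τ(x,y;ξ)`: the one-dimensional Lebesgue measure of `[x,y] ∖ Σ(ξ)`. -/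
def segTau (ξ : Config d) (a b : Euc d) : ℝ :=
  ‖b - a‖ * (volume {t : ℝ | t ∈ Icc (0:ℝ) 1 ∧ a + t • (b - a) ∉ ξ.sigma}).toReal

/-- `ℓ(π)`: the Euclidean length of a finite sequence of points. -/
def pathLen (n : ℕ) (x : Fin (n+1) → Euc d) : ℝ :=
  ∑ i : Fin n, dist (x i.castSucc) (x i.succ)

/-- `τ(π;ξ)`, the travel time of a path. -/
def pathTau (ξ : Config d) (n : ℕ) (x : Fin (n+1) → Euc d) : ℝ :=
  ∑ i : Fin n, segTau ξ (x i.castSucc) (x i.succ)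

/-- The radius of the ball `Z_i^+(π;ξ)` removed at the left endpoint of segment `i`
(zero when the left endpoint is `x_0`, following `Z_0^+ = ∅`). -/
def leftR (ξ : Config d) {n : ℕ} (x : Fin (n+1) → Euc d) (i : Fin n) : ℝ :=
  if (i : ℕ) = 0 then 0 else ξ.radius (x i.castSucc)

/-- The radius of the ball `Z_{i+1}^-(π;ξ)` removed at the right endpoint of segment `i`
(zero when the right endpoint is `x_n`, following `Z_n^- = ∅`). -/
def rightR (ξ : Config d) {n : ℕ} (x : Fin (n+1) → Euc d) (i : Fin n) : ℝ :=
  if (i : ℕ) + 1 = n then 0 else ξ.radius (x i.succ)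

/-- The local travel time of the segment `[a,b]` with removed balls of radii `rl` at `a`
and `rr` at `b`: the length of `[a,b] ∖ (B(a,rl) ∪ B(b,rr))`. -/
def locSegTau (rl rr : ℝ) (a b : Euc d) : ℝ :=
  ‖b - a‖ * (volume {t : ℝ | t ∈ Icc (0:ℝ) 1 ∧
    a + t • (b - a) ∉ Metric.ball a rl ∪ Metric.ball b rr}).toReal

/-- `τ̃(π;ξ)`, the local travel time of a finite sequence of points. -/
def pathLocTau (ξ : Config d) (n : ℕ) (x : Fin (n+1) → Euc d) : ℝ :=
  ∑ i : Fin n, locSegTau (leftR ξ x i) (rightR ξ x i) (x i.castSucc) (x i.succ)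

/-- `π` is a `ξ`-good path: interior points are centers of `ξ`, and on each segment the
removed set `Z_{i-1}^+ ∪ Z_i^-` coincides with `Σ(ξ)`. -/
def IsGood (ξ : Config d) (n : ℕ) (x : Fin (n+1) → Euc d) : Prop :=
  (∀ i : Fin (n+1), 0 < (i : ℕ) → (i : ℕ) < n → 0 < ξ.radius (x i)) ∧
  ∀ i : Fin n,
    segment ℝ (x i.castSucc) (x i.succ) ∩
      (Metric.ball (x i.castSucc) (leftR ξ x i) ∪ Metric.ball (x i.succ) (rightR ξ x i)) =
    segment ℝ (x i.castSucc) (x i.succ) ∩ ξ.sigma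

/-- `T(A,B;ξ)`: the infimum of travel times over paths (sequences of distinct points)
from `A` to `B`; `T(a,b;ξ)` is the special case `A = {a}`, `B = {b}`. -/
def Ttime (ξ : Config d) (A B : Set (Euc d)) : ℝ :=
  sInf {v : ℝ | ∃ (n : ℕ) (x : Fin (n+1) → Euc d), Function.Injective x ∧
    x 0 ∈ A ∧ x (Fin.last n) ∈ B ∧ v = pathTau ξ n x}

/-- `T^□(a_0,…,a_k;ξ)`: infimum over pairwise disjoint finite subsets `ξ^1,…,ξ^k` of `ξ`
(given by disjoint finite sets of centers) of `Σ_j T(a_{j-1},a_j;ξ^j)`. -/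
def TSq (ξ : Config d) (k : ℕ) (a : ℕ → Euc d) : ℝ :=
  sInf {v : ℝ | ∃ S : ℕ → Set (Euc d),
    (∀ j, (S j).Finite) ∧
    (∀ j, ∀ c ∈ S j, 0 < ξ.radius c) ∧
    (∀ i j, i < k → j < k → i ≠ j → Disjoint (S i) (S j)) ∧
    v = ∑ j ∈ Finset.range k, Ttime (ξ.restrict (S j)) {a j} {a (j+1)}}

/-- The greedy functional `G(s;ξ)`: the supremum of `r(π;ξ)/ℓ(π)` over paths starting at
`0`, with at least two points, and at least one point outside the open ball `B(0,s)`. -/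
def greedyG (ξ : Config d) (s : ℝ) : ℝ :=
  sSup {g : ℝ | ∃ (n : ℕ) (x : Fin (n+1) → Euc d), Function.Injective x ∧ 1 ≤ n ∧
    x 0 = 0 ∧ (∃ i : Fin (n+1), s ≤ ‖x i‖) ∧
    g = (∑ i : Fin (n+1), ξ.radius (x i)) / pathLen n x}

/-- The vertices of a path, clamped: `clampPt n x j = x_{min(j,n)}`. -/
def clampPt (n : ℕ) (x : Fin (n+1) → Euc d) (j : ℕ) : Euc d :=
  x ⟨min j n, Nat.lt_succ_of_le (min_le_right j n)⟩

/-- Cumulative length of the first `j` segments of the path. -/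
def cumLen (n : ℕ) (x : Fin (n+1) → Euc d) (j : ℕ) : ℝ :=
  ∑ i ∈ Finset.range j, dist (clampPt n x i) (clampPt n x (i+1))

/-- Index of the segment containing the arc-length parameter `t`. -/
def segIdx (n : ℕ) (x : Fin (n+1) → Euc d) (t : ℝ) : ℕ :=
  sSup {j : ℕ | j ≤ n ∧ cumLen n x j ≤ t}

/-- The arc-length parametrization `[0,ℓ(π)] → ℝ^d` of the path. -/
def pathParam (n : ℕ) (x : Fin (n+1) → Euc d) (t : ℝ) : Euc d :=
  clampPt n x (segIdx n x t) +
    ((t - cumLen n x (segIdx n x t)) /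
        dist (clampPt n x (segIdx n x t)) (clampPt n x (segIdx n x t + 1))) •
      (clampPt n x (segIdx n x t + 1) - clampPt n x (segIdx n x t))

/-- `(a_0,…,a_k)`, together with the times `(t_0,…,t_k)`, is the `ρ`-skeleton of the path
`π` (viewed as an arc-length parametrized curve): `t_0 = 0`, `a_i = π(t_i)`, each `t_{i+1}`
is the first time after `t_i` at which the curve meets the sphere `S(a_i,ρ)`, and after
time `t_k` the curve stays inside the open ball `B(a_k,ρ)`. -/
structure IsSkeleton (n : ℕ) (x : Fin (n+1) → Euc d) (ρ : ℝ) (k : ℕ)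
    (a : ℕ → Euc d) (t : ℕ → ℝ) : Prop where
  t_zero : t 0 = 0
  a_eq : ∀ i ≤ k, a i = pathParam n x (t i)
  t_mono : ∀ i < k, t i < t (i + 1)
  t_mem : ∀ i ≤ k, 0 ≤ t i ∧ t i ≤ pathLen n x
  stays : ∀ i < k, ∀ s, t i ≤ s → s < t (i + 1) → pathParam n x s ∈ Metric.ball (a i) ρ
  exits : ∀ i < k, dist (pathParam n x (t (i + 1))) (a i) = ρ
  final : ∀ s, t k ≤ s → s ≤ pathLen n x → pathParam n x s ∈ Metric.ball (a k) ρ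

/-- `γ` (given by `m` segments with vertices `y`) is the sub-path of `π` obtained by
cutting the arc-length parametrized curve of `π` between the times `u` and `v`: its
points are the points `π(s_i)` for strictly increasing times `s_0 = u < s_1 < … < s_m = v`
whose interior ones are exactly the passage times at the vertices of `π` lying strictly
between `u` and `v`. -/
def IsCut {d : ℕ} (n : ℕ) (x : Fin (n+1) → Euc d) (u v : ℝ)
    (m : ℕ) (y : Fin (m+1) → Euc d) : Prop :=
  ∃ s : Fin (m+1) → ℝ,
    s 0 = u ∧ s (Fin.last m) = v ∧ StrictMono s ∧
    (∀ i, y i = pathParam n x (s i)) ∧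
    (∀ i : Fin (m+1), 0 < (i : ℕ) → (i : ℕ) < m → ∃ j ≤ n, s i = cumLen n x j) ∧
    (∀ j ≤ n, u < cumLen n x j → cumLen n x j < v →
      ∃ i : Fin (m+1), 0 < (i : ℕ) ∧ (i : ℕ) < m ∧ s i = cumLen n x j)
section Aux

variable {d : ℕ}

lemma clampPt_eq (n : ℕ) (x : Fin (n+1) → Euc d) (j : ℕ) (h : j ≤ n) :
    clampPt n x j = x ⟨j, by omega⟩ := by
  have he : (⟨min j n, Nat.lt_succ_of_le (min_le_right j n)⟩ : Fin (n+1)) = ⟨j, by omega⟩ :=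
    Fin.ext (min_eq_left h)
  unfold clampPt
  rw [he]

lemma clampPt_castSucc (n : ℕ) (x : Fin (n+1) → Euc d) (i : Fin n) :
    x i.castSucc = clampPt n x (i : ℕ) := by
  rw [clampPt_eq n x i (le_of_lt i.isLt)]
  rfl

lemma clampPt_succ' (n : ℕ) (x : Fin (n+1) → Euc d) (i : Fin n) :
    x i.succ = clampPt n x ((i : ℕ)+1) := by
  rw [clampPt_eq n x ((i:ℕ)+1) i.isLt]
  rfl

lemma cumLen_zero (n : ℕ) (x : Fin (n+1) → Euc d) : cumLen n x 0 = 0 := by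
  simp [cumLen]

lemma cumLen_succ (n : ℕ) (x : Fin (n+1) → Euc d) (j : ℕ) :
    cumLen n x (j+1) = cumLen n x j + dist (clampPt n x j) (clampPt n x (j+1)) :=
  Finset.sum_range_succ _ _

lemma cumLen_mono (n : ℕ) (x : Fin (n+1) → Euc d) : Monotone (cumLen n x) := by
  intro a b h
  exact Finset.sum_le_sum_of_subset_of_nonneg (Finset.range_subset_range.2 h)
    (fun _ _ _ => dist_nonneg)

lemma cumLen_nonneg (n : ℕ) (x : Fin (n+1) → Euc d) (j : ℕ) : 0 ≤ cumLen n x j :=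
  Finset.sum_nonneg (fun _ _ => dist_nonneg)

lemma dist_clamp_pos (n : ℕ) (x : Fin (n+1) → Euc d) (hinj : Function.Injective x)
    (j : ℕ) (h : j < n) : 0 < dist (clampPt n x j) (clampPt n x (j+1)) := by
  rw [clampPt_eq n x j (le_of_lt h), clampPt_eq n x (j+1) h]
  refine dist_pos.2 (fun he => ?_)
  have := hinj he
  simp only [Fin.mk.injEq] at this
  omega

lemma cumLen_lt (n : ℕ) (x : Fin (n+1) → Euc d) (hinj : Function.Injective x)
    (j j' : ℕ) (h : j < j') (h' : j' ≤ n) : cumLen n x j < cumLen n x j' := by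
  have h1 : cumLen n x j < cumLen n x (j+1) := by
    rw [cumLen_succ]
    have := dist_clamp_pos n x hinj j (by omega)
    linarith
  exact lt_of_lt_of_le h1 (cumLen_mono n x (by omega))

lemma cumLen_lt_iff (n : ℕ) (x : Fin (n+1) → Euc d) (hinj : Function.Injective x)
    (j j' : ℕ) (hj : j ≤ n) (hj' : j' ≤ n) :
    cumLen n x j < cumLen n x j' ↔ j < j' := by
  constructor
  · intro h
    by_contra hc
    exact absurd (cumLen_mono n x (by omega : j' ≤ j)) (not_le.2 h)
  · exact fun h => cumLen_lt n x hinj j j' h hj'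

lemma cumLen_pathLen (n : ℕ) (x : Fin (n+1) → Euc d) : cumLen n x n = pathLen n x := by
  unfold pathLen cumLen
  rw [← Fin.sum_univ_eq_sum_range (fun j => dist (clampPt n x j) (clampPt n x (j+1))) n]
  exact Finset.sum_congr rfl (fun i _ => by
    rw [← clampPt_castSucc, ← clampPt_succ'])

lemma segIdx_eq (n : ℕ) (x : Fin (n+1) → Euc d) (p : ℕ) (hp : p ≤ n) (s : ℝ)
    (h0 : 0 ≤ s) (h1 : cumLen n x p ≤ s) (h2 : p = n ∨ s < cumLen n x (p+1)) :
    segIdx n x s = p := by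
  unfold segIdx
  have hmem : p ∈ {j : ℕ | j ≤ n ∧ cumLen n x j ≤ s} := ⟨hp, h1⟩
  have hub : ∀ j ∈ {j : ℕ | j ≤ n ∧ cumLen n x j ≤ s}, j ≤ p := by
    rintro j ⟨hjn, hjs⟩
    rcases h2 with rfl | h2
    · exact hjn
    · by_contra hc
      have : cumLen n x (p+1) ≤ cumLen n x j := cumLen_mono n x (by omega)
      linarith
  exact le_antisymm (csSup_le ⟨p, hmem⟩ hub) (le_csSup ⟨p, hub⟩ hmem)

lemma pathParam_cumLen (n : ℕ) (x : Fin (n+1) → Euc d) (hinj : Function.Injective x)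
    (q : ℕ) (hq : q ≤ n) :
    pathParam n x (cumLen n x q) = clampPt n x q := by
  unfold pathParam
  rw [segIdx_eq n x q hq _ (cumLen_nonneg n x q) le_rfl ?_]
  · simp
  · rcases lt_or_eq_of_le hq with h | h
    · exact Or.inr (cumLen_lt n x hinj q (q+1) (by omega) h)
    · exact Or.inl h

end Aux

section Aux2

variable {d : ℕ}

lemma pathParam_formula (n : ℕ) (x : Fin (n+1) → Euc d) (hinj : Function.Injective x)
    (p : ℕ) (hp : p < n) (s : ℝ)
    (h1 : cumLen n x p ≤ s) (h2 : s ≤ cumLen n x (p+1)) :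
    pathParam n x s = clampPt n x p +
      ((s - cumLen n x p) / (cumLen n x (p+1) - cumLen n x p)) •
        (clampPt n x (p+1) - clampPt n x p) := by
  have hD : cumLen n x (p+1) - cumLen n x p = dist (clampPt n x p) (clampPt n x (p+1)) := by
    rw [cumLen_succ]; ring
  have hDpos : (0:ℝ) < cumLen n x (p+1) - cumLen n x p := by
    rw [hD]; exact dist_clamp_pos n x hinj p hp
  have h0s : (0:ℝ) ≤ s := le_trans (cumLen_nonneg n x p) h1
  rcases lt_or_eq_of_le h2 with h2' | h2'
  · unfold pathParam
    rw [segIdx_eq n x p (le_of_lt hp) s h0s h1 (Or.inr h2'), hD]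
  · rw [h2', pathParam_cumLen n x hinj (p+1) hp]
    have : (cumLen n x (p+1) - cumLen n x p) / (cumLen n x (p+1) - cumLen n x p) = 1 :=
      div_self (ne_of_gt hDpos)
    rw [this, one_smul]
    abel

lemma pathParam_sub (n : ℕ) (x : Fin (n+1) → Euc d) (hinj : Function.Injective x)
    (p : ℕ) (hp : p < n) (u v : ℝ)
    (hu1 : cumLen n x p ≤ u) (hu2 : u ≤ cumLen n x (p+1))
    (hv1 : cumLen n x p ≤ v) (hv2 : v ≤ cumLen n x (p+1)) :
    pathParam n x v - pathParam n x u =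
      ((v - u) / (cumLen n x (p+1) - cumLen n x p)) •
        (clampPt n x (p+1) - clampPt n x p) := by
  rw [pathParam_formula n x hinj p hp u hu1 hu2, pathParam_formula n x hinj p hp v hv1 hv2,
    add_sub_add_left_eq_sub, ← sub_smul]
  congr 1
  ring

lemma norm_clamp (n : ℕ) (x : Fin (n+1) → Euc d) (p : ℕ) :
    ‖clampPt n x (p+1) - clampPt n x p‖ = cumLen n x (p+1) - cumLen n x p := by
  rw [cumLen_succ, add_sub_cancel_left, dist_eq_norm, norm_sub_rev]

lemma pathParam_dist (n : ℕ) (x : Fin (n+1) → Euc d) (hinj : Function.Injective x)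
    (p : ℕ) (hp : p < n) (u v : ℝ) (huv : u ≤ v)
    (hu1 : cumLen n x p ≤ u) (hu2 : u ≤ cumLen n x (p+1))
    (hv1 : cumLen n x p ≤ v) (hv2 : v ≤ cumLen n x (p+1)) :
    ‖pathParam n x v - pathParam n x u‖ = v - u := by
  have hDpos : (0:ℝ) < cumLen n x (p+1) - cumLen n x p := by
    have := dist_clamp_pos n x hinj p hp
    rw [cumLen_succ]; linarith
  rw [pathParam_sub n x hinj p hp u v hu1 hu2 hv1 hv2, norm_smul, norm_clamp,
    Real.norm_eq_abs, abs_div, abs_of_nonneg (by linarith : (0:ℝ) ≤ v - u),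
    abs_of_pos hDpos]
  field_simp

lemma pathParam_interp (n : ℕ) (x : Fin (n+1) → Euc d) (hinj : Function.Injective x)
    (p : ℕ) (hp : p < n) (u v : ℝ) (huv : u ≤ v)
    (hu1 : cumLen n x p ≤ u) (hv2 : v ≤ cumLen n x (p+1))
    (t : ℝ) (ht0 : 0 ≤ t) (ht1 : t ≤ 1) :
    pathParam n x u + t • (pathParam n x v - pathParam n x u) =
      pathParam n x (u + t * (v - u)) := by
  have hu2 : u ≤ cumLen n x (p+1) := le_trans huv hv2
  have hv1 : cumLen n x p ≤ v := le_trans hu1 huv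
  have hw1 : cumLen n x p ≤ u + t * (v - u) := by nlinarith
  have hw2 : u + t * (v - u) ≤ cumLen n x (p+1) := by nlinarith
  have hDpos : (0:ℝ) < cumLen n x (p+1) - cumLen n x p := by
    have := dist_clamp_pos n x hinj p hp
    rw [cumLen_succ]; linarith
  rw [pathParam_sub n x hinj p hp u v hu1 hu2 hv1 hv2,
    pathParam_formula n x hinj p hp u hu1 hu2,
    pathParam_formula n x hinj p hp _ hw1 hw2, smul_smul, add_assoc, ← add_smul]
  congr 1
  field_simp
  ring

lemma locSegTau_eq_vol (n : ℕ) (x : Fin (n+1) → Euc d) (hinj : Function.Injective x)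
    (p : ℕ) (hp : p < n) (u v : ℝ) (huv : u < v)
    (hu1 : cumLen n x p ≤ u) (hv2 : v ≤ cumLen n x (p+1)) (rl rr : ℝ) :
    locSegTau rl rr (pathParam n x u) (pathParam n x v) =
      (volume {s : ℝ | s ∈ Icc u v ∧ pathParam n x s ∉
        Metric.ball (pathParam n x u) rl ∪ Metric.ball (pathParam n x v) rr}).toReal := by
  have hu2 : u ≤ cumLen n x (p+1) := le_trans (le_of_lt huv) hv2
  have hv1 : cumLen n x p ≤ v := le_trans hu1 (le_of_lt huv)
  have hc : ‖pathParam n x v - pathParam n x u‖ = v - u :=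
    pathParam_dist n x hinj p hp u v (le_of_lt huv) hu1 hu2 hv1 hv2
  have hcpos : (0:ℝ) < v - u := by linarith
  set R := Metric.ball (pathParam n x u) rl ∪ Metric.ball (pathParam n x v) rr with hR
  have hset : {t : ℝ | t ∈ Icc (0:ℝ) 1 ∧
      pathParam n x u + t • (pathParam n x v - pathParam n x u) ∉ R} =
      (fun t => u + (v - u) * t) ⁻¹' {s : ℝ | s ∈ Icc u v ∧ pathParam n x s ∉ R} := by
    ext t
    simp only [mem_preimage, mem_setOf_eq, mem_Icc]
    constructor
    · rintro ⟨⟨ht0, ht1⟩, hQ⟩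
      refine ⟨⟨by nlinarith, by nlinarith⟩, ?_⟩
      rw [show u + (v - u) * t = u + t * (v - u) by ring,
        ← pathParam_interp n x hinj p hp u v (le_of_lt huv) hu1 hv2 t ht0 ht1]
      exact hQ
    · rintro ⟨⟨hs1, hs2⟩, hQ⟩
      have ht0 : (0:ℝ) ≤ t := by nlinarith
      have ht1 : t ≤ 1 := by nlinarith
      refine ⟨⟨ht0, ht1⟩, ?_⟩
      rw [pathParam_interp n x hinj p hp u v (le_of_lt huv) hu1 hv2 t ht0 ht1,
        show u + t * (v - u) = u + (v - u) * t by ring]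
      exact hQ
  have hcomp : (fun t : ℝ => u + (v - u) * t) = (fun s => u + s) ∘ (fun t => (v - u) * t) := rfl
  unfold locSegTau
  rw [← hR, hset, hcomp, Set.preimage_comp, Real.volume_preimage_mul_left (ne_of_gt hcpos),
    measure_preimage_add]
  rw [ENNReal.toReal_mul, ENNReal.toReal_ofReal (abs_nonneg _), hc,
    abs_of_pos (inv_pos.2 hcpos)]
  field_simp

lemma pathParam_dist_left (n : ℕ) (x : Fin (n+1) → Euc d) (hinj : Function.Injective x)
    (p : ℕ) (hp : p < n) (s : ℝ)
    (h1 : cumLen n x p ≤ s) (h2 : s ≤ cumLen n x (p+1)) :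
    ‖pathParam n x s - clampPt n x p‖ = s - cumLen n x p := by
  have := pathParam_dist n x hinj p hp (cumLen n x p) s h1 le_rfl
    (le_of_lt (by have := dist_clamp_pos n x hinj p hp; rw [cumLen_succ]; linarith)) h1 h2
  rwa [pathParam_cumLen n x hinj p (le_of_lt hp)] at this

lemma pathParam_dist_right (n : ℕ) (x : Fin (n+1) → Euc d) (hinj : Function.Injective x)
    (p : ℕ) (hp : p < n) (s : ℝ)
    (h1 : cumLen n x p ≤ s) (h2 : s ≤ cumLen n x (p+1)) :
    ‖pathParam n x s - clampPt n x (p+1)‖ = cumLen n x (p+1) - s := by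
  have := pathParam_dist n x hinj p hp s (cumLen n x (p+1)) h2 h1 h2
    (cumLen_mono n x (by omega)) le_rfl
  rw [pathParam_cumLen n x hinj (p+1) hp] at this
  rw [norm_sub_rev]
  exact this

end Aux2
section Aux3

variable {d : ℕ}

lemma cut_bound (ξ : Config d) (M : ℝ) (hM : 0 < M) (hrad : ∀ c, ξ.radius c ≤ M)
    (n : ℕ) (x : Fin (n+1) → Euc d) (hinj : Function.Injective x)
    (u v : ℝ) (hu0 : 0 ≤ u) (huv : u < v) (hvl : v ≤ pathLen n x)
    (m : ℕ) (y : Fin (m+1) → Euc d) (hcut : IsCut n x u v m y)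
    (E : Set ℝ)
    (hE : ∀ p, ∀ hp : p < n, ∀ r : ℝ, cumLen n x p < r → r < cumLen n x (p+1) →
      pathParam n x r ∉ Metric.ball (clampPt n x p) (leftR ξ x ⟨p, hp⟩) ∪
        Metric.ball (clampPt n x (p+1)) (rightR ξ x ⟨p, hp⟩) → r ∈ E) :
    pathLocTau ξ m y ≤ (volume.restrict E (Ioo u v)).toReal + M + M := by
  classical
  obtain ⟨s, hs0, hslast, hsmono, hy, hint, hcomp⟩ := hcut
  have hm : 1 ≤ m := by
    rcases Nat.eq_zero_or_pos m with rfl | h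
    · have he : (Fin.last 0) = (0 : Fin 1) := rfl
      rw [he, hs0] at hslast
      linarith
    · exact h
  have hsl : ∀ i : Fin (m+1), u ≤ s i := fun i => by
    have := hsmono.monotone (Fin.zero_le i); rwa [hs0] at this
  have hsu : ∀ i : Fin (m+1), s i ≤ v := fun i => by
    have := hsmono.monotone (Fin.le_last i); rwa [hslast] at this
  have hl : v ≤ cumLen n x n := by rwa [cumLen_pathLen]
  have claim : ∀ i : Fin m, ∃ p, ∃ hp : p < n,
      cumLen n x p ≤ s i.castSucc ∧ s i.succ ≤ cumLen n x (p+1) ∧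
      (0 < (i:ℕ) → s i.castSucc = cumLen n x p ∧ 0 < p) ∧
      ((i:ℕ)+1 < m → s i.succ = cumLen n x (p+1) ∧ p+1 < n) := by
    intro i
    have hnotbetween : ∀ q ≤ n,
        ¬ (s i.castSucc < cumLen n x q ∧ cumLen n x q < s i.succ) := by
      rintro q hq ⟨hlo, hro⟩
      have h1 : u < cumLen n x q := lt_of_le_of_lt (hsl _) hlo
      have h2 : cumLen n x q < v := lt_of_lt_of_le hro (hsu _)
      obtain ⟨l, hl0, hlm, hleq⟩ := hcomp q hq h1 h2
      have hil : i.castSucc < l := hsmono.lt_iff_lt.1 (by rw [hleq]; exact hlo)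
      have hli : l < i.succ := hsmono.lt_iff_lt.1 (by rw [hleq]; exact hro)
      rw [Fin.lt_def] at hil hli
      simp only [Fin.coe_castSucc, Fin.val_succ] at hil hli
      omega
    have last_part : ∀ p : ℕ, p < n → cumLen n x p ≤ s i.castSucc →
        s i.succ ≤ cumLen n x (p+1) →
        ((i:ℕ)+1 < m → s i.succ = cumLen n x (p+1) ∧ p+1 < n) := by
      intro p hpn hcp hs1 hlt
      obtain ⟨q', hq'n, heq⟩ := hint i.succ (by rw [Fin.val_succ]; omega)
        (by rw [Fin.val_succ]; omega)
      have h1 : q' ≤ p+1 := by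
        by_contra hc
        push_neg at hc
        have := cumLen_lt n x hinj (p+1) q' hc hq'n
        rw [← heq] at this
        linarith
      have h2 : p < q' := by
        by_contra hc
        push_neg at hc
        have hmn : cumLen n x q' ≤ cumLen n x p := cumLen_mono n x hc
        have hcs : s i.castSucc < s i.succ := hsmono Fin.castSucc_lt_succ
        rw [heq] at hcs
        linarith
      have hq : q' = p+1 := by omega
      rw [hq] at heq
      refine ⟨heq, ?_⟩
      have hlastlt : s i.succ < v := by
        rw [← hslast]
        exact hsmono (by rw [Fin.lt_def]; rw [Fin.val_succ, Fin.val_last]; omega)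
      have hcc : cumLen n x (p+1) < cumLen n x n := by
        rw [← heq]; linarith
      by_contra hc
      push_neg at hc
      have hpn1 : p+1 = n := by omega
      rw [hpn1] at hcc
      exact absurd hcc (lt_irrefl _)
    by_cases h0 : (i:ℕ) = 0
    · set p := Nat.findGreatest (fun q => cumLen n x q ≤ u) n with hpdef
      have hple : p ≤ n := Nat.findGreatest_le n
      have hcp : cumLen n x p ≤ u :=
        Nat.findGreatest_spec (P := fun q => cumLen n x q ≤ u) (Nat.zero_le n)
          (show cumLen n x 0 ≤ u by rw [cumLen_zero]; exact hu0)
      have hscast : s i.castSucc = u := by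
        have he : i.castSucc = 0 := Fin.ext (by simpa using h0)
        rw [he, hs0]
      have hpn : p < n := by
        rcases lt_or_eq_of_le hple with h | h
        · exact h
        · exfalso
          rw [h] at hcp
          linarith
      have hnext : u < cumLen n x (p+1) := by
        by_contra hc
        push_neg at hc
        exact Nat.findGreatest_is_greatest (Nat.lt_succ_self p) (by omega) hc
      have hs1 : s i.succ ≤ cumLen n x (p+1) := by
        by_contra hc
        push_neg at hc
        exact hnotbetween (p+1) (by omega) ⟨by rw [hscast]; exact hnext, hc⟩
      exact ⟨p, hpn, by rw [hscast]; exact hcp, hs1,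
        fun hpos => absurd h0 (by omega), last_part p hpn (by rw [hscast]; exact hcp) hs1⟩
    · have hi0 : 0 < (i:ℕ) := Nat.pos_of_ne_zero h0
      obtain ⟨q, hqn, heq⟩ := hint i.castSucc (by rw [Fin.coe_castSucc]; exact hi0)
        (by rw [Fin.coe_castSucc]; exact i.isLt)
      have hqpos : 0 < q := by
        have hlt : cumLen n x 0 < cumLen n x q := by
          rw [cumLen_zero, ← heq]
          calc (0:ℝ) ≤ u := hu0
          _ = s 0 := hs0.symm
          _ < s i.castSucc := hsmono (by rw [Fin.lt_def]; simpa using hi0)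
        by_contra hc
        push_neg at hc
        have hq0 : q = 0 := by omega
        rw [hq0] at hlt
        exact absurd hlt (lt_irrefl _)
      have hqltn : q < n := by
        have hlt : cumLen n x q < cumLen n x n := by
          rw [← heq]
          calc s i.castSucc < s i.succ := hsmono Fin.castSucc_lt_succ
          _ ≤ v := hsu _
          _ ≤ cumLen n x n := hl
        by_contra hc
        push_neg at hc
        have hq0 : q = n := by omega
        rw [hq0] at hlt
        exact absurd hlt (lt_irrefl _)
      have hs1 : s i.succ ≤ cumLen n x (q+1) := by
        by_contra hc
        push_neg at hc
        refine hnotbetween (q+1) (by omega) ⟨?_, hc⟩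
        rw [heq]
        exact cumLen_lt n x hinj q (q+1) (by omega) (by omega)
      exact ⟨q, hqltn, heq.ge, hs1, fun _ => ⟨heq, hqpos⟩,
        last_part q hqltn heq.ge hs1⟩
  set B : Fin m → Set ℝ := fun i => {r : ℝ | r ∈ Icc (s i.castSucc) (s i.succ) ∧
    pathParam n x r ∉ Metric.ball (y i.castSucc) (leftR ξ y i) ∪
      Metric.ball (y i.succ) (rightR ξ y i)} with hBdef
  have htau : pathLocTau ξ m y = ∑ i : Fin m, (volume (B i)).toReal := by
    unfold pathLocTau
    refine Finset.sum_congr rfl (fun i _ => ?_)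
    obtain ⟨p, hp, h1, h2, h3, h4⟩ := claim i
    have hlt : s i.castSucc < s i.succ := hsmono Fin.castSucc_lt_succ
    have hK := locSegTau_eq_vol n x hinj p hp _ _ hlt h1 h2 (leftR ξ y i) (rightR ξ y i)
    rw [← hy i.castSucc, ← hy i.succ] at hK
    rw [hK]
  have hibound : ∀ i : Fin m, volume (B i) ≤
      volume.restrict E (Ioo (s i.castSucc) (s i.succ)) +
      ((if (i:ℕ) = 0 then ENNReal.ofReal M else 0) +
       (if (i:ℕ)+1 = m then ENNReal.ofReal M else 0)) := by
    intro i
    obtain ⟨p, hp, h1, h2, h3, h4⟩ := claim i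
    set X2 : Set ℝ := if (i:ℕ) = 0 then Ico (cumLen n x p) (cumLen n x p + M) else ∅ with hX2
    set X3 : Set ℝ := if (i:ℕ)+1 = m then
      Ioc (cumLen n x (p+1) - M) (cumLen n x (p+1)) else ∅ with hX3
    set F : Set ℝ := {cumLen n x p, cumLen n x (p+1), s i.castSucc, s i.succ} with hF
    have hsub : B i ⊆ (Ioo (s i.castSucc) (s i.succ) ∩ E) ∪ X2 ∪ X3 ∪ F := by
      rintro r ⟨⟨hr1, hr2⟩, hrR⟩
      by_cases hrF : r ∈ F
      · exact Or.inr hrF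
      have hrp1 : cumLen n x p ≤ r := le_trans h1 hr1
      have hrp2 : r ≤ cumLen n x (p+1) := le_trans hr2 h2
      have hne : r ≠ cumLen n x p ∧ r ≠ cumLen n x (p+1) ∧
          r ≠ s i.castSucc ∧ r ≠ s i.succ := by
        rw [hF] at hrF
        simp only [mem_insert_iff, mem_singleton_iff] at hrF
        tauto
      have hIoo : r ∈ Ioo (s i.castSucc) (s i.succ) :=
        ⟨lt_of_le_of_ne hr1 (Ne.symm hne.2.2.1), lt_of_le_of_ne hr2 hne.2.2.2⟩
      have hI2a : cumLen n x p < r := lt_of_le_of_ne hrp1 (Ne.symm hne.1)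
      have hI2b : r < cumLen n x (p+1) := lt_of_le_of_ne hrp2 hne.2.1
      by_cases hRpi : pathParam n x r ∈
          Metric.ball (clampPt n x p) (leftR ξ x ⟨p, hp⟩) ∪
          Metric.ball (clampPt n x (p+1)) (rightR ξ x ⟨p, hp⟩)
      · rcases hRpi with hL | hR
        · have hi0 : (i:ℕ) = 0 := by
            by_contra hi0
            obtain ⟨hsc, hppos⟩ := h3 (Nat.pos_of_ne_zero hi0)
            apply hrR
            left
            have hyc : y i.castSucc = clampPt n x p := by
              rw [hy i.castSucc, hsc, pathParam_cumLen n x hinj p (le_of_lt hp)]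
            have hlr : leftR ξ y i = leftR ξ x ⟨p, hp⟩ := by
              unfold leftR
              rw [if_neg hi0, if_neg (show ¬((⟨p, hp⟩ : Fin n) : ℕ) = 0 by simp; omega)]
              rw [hyc]
              congr 1
              exact (clampPt_castSucc n x ⟨p, hp⟩).symm
            rw [hyc, hlr]
            exact hL
          refine Or.inl (Or.inl (Or.inr ?_))
          rw [hX2, if_pos hi0]
          have hd : ‖pathParam n x r - clampPt n x p‖ = r - cumLen n x p :=
            pathParam_dist_left n x hinj p hp r hrp1 hrp2
          have hball := Metric.mem_ball.1 hL
          rw [dist_eq_norm, hd] at hball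
          have hlM : leftR ξ x ⟨p, hp⟩ ≤ M := by
            unfold leftR
            split
            · exact le_of_lt hM
            · exact hrad _
          exact ⟨hrp1, by linarith⟩
        · have him : (i:ℕ)+1 = m := by
            by_contra him
            have hlt2 : (i:ℕ)+1 < m := by have := i.isLt; omega
            obtain ⟨hsc, hppn⟩ := h4 hlt2
            apply hrR
            right
            have hyc : y i.succ = clampPt n x (p+1) := by
              rw [hy i.succ, hsc, pathParam_cumLen n x hinj (p+1) (le_of_lt hppn)]
            have hlr : rightR ξ y i = rightR ξ x ⟨p, hp⟩ := by
              unfold rightR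
              rw [if_neg him, if_neg (show ¬((⟨p, hp⟩ : Fin n) : ℕ) + 1 = n by simp; omega)]
              rw [hyc]
              congr 1
              exact (clampPt_succ' n x ⟨p, hp⟩).symm
            rw [hyc, hlr]
            exact hR
          refine Or.inl (Or.inr ?_)
          rw [hX3, if_pos him]
          have hd : ‖pathParam n x r - clampPt n x (p+1)‖ = cumLen n x (p+1) - r :=
            pathParam_dist_right n x hinj p hp r hrp1 hrp2
          have hball := Metric.mem_ball.1 hR
          rw [dist_eq_norm, hd] at hball
          have hlM : rightR ξ x ⟨p, hp⟩ ≤ M := by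
            unfold rightR
            split
            · exact le_of_lt hM
            · exact hrad _
          exact ⟨by linarith, hrp2⟩
      · exact Or.inl (Or.inl (Or.inl ⟨hIoo, hE p hp r hI2a hI2b hRpi⟩))
    have hFzero : volume F = 0 := by
      rw [hF]
      exact Set.Countable.measure_zero (Set.Countable.insert _
        (Set.Countable.insert _ (Set.Countable.insert _ (Set.countable_singleton _)))) _
    have hX2le : volume X2 ≤ if (i:ℕ) = 0 then ENNReal.ofReal M else 0 := by
      rw [hX2]
      split
      · rw [Real.volume_Ico]
        simp
      · simp
    have hX3le : volume X3 ≤ if (i:ℕ)+1 = m then ENNReal.ofReal M else 0 := by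
      rw [hX3]
      split
      · rw [Real.volume_Ioc]
        simp
      · simp
    have hrestr : volume (Ioo (s i.castSucc) (s i.succ) ∩ E) =
        volume.restrict E (Ioo (s i.castSucc) (s i.succ)) :=
      (Measure.restrict_apply measurableSet_Ioo).symm
    calc volume (B i) ≤ volume ((Ioo (s i.castSucc) (s i.succ) ∩ E) ∪ X2 ∪ X3 ∪ F) :=
          measure_mono hsub
    _ ≤ volume ((Ioo (s i.castSucc) (s i.succ) ∩ E) ∪ X2 ∪ X3) + volume F :=
          measure_union_le _ _
    _ = volume ((Ioo (s i.castSucc) (s i.succ) ∩ E) ∪ X2 ∪ X3) := by rw [hFzero, add_zero]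
    _ ≤ volume ((Ioo (s i.castSucc) (s i.succ) ∩ E) ∪ X2) + volume X3 :=
          measure_union_le _ _
    _ ≤ (volume (Ioo (s i.castSucc) (s i.succ) ∩ E) + volume X2) + volume X3 := by
          gcongr
          exact measure_union_le _ _
    _ ≤ volume.restrict E (Ioo (s i.castSucc) (s i.succ)) +
        ((if (i:ℕ) = 0 then ENNReal.ofReal M else 0) +
         (if (i:ℕ)+1 = m then ENNReal.ofReal M else 0)) := by
          rw [hrestr, add_assoc]
          gcongr
  have hdisj : ((Finset.univ : Finset (Fin m)) : Set (Fin m)).PairwiseDisjoint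
      (fun i : Fin m => Ioo (s i.castSucc) (s i.succ)) := by
    intro i _ j _ hij
    have key : ∀ a b : Fin m, a < b →
        Disjoint (Ioo (s a.castSucc) (s a.succ)) (Ioo (s b.castSucc) (s b.succ)) := by
      intro a b hab
      have hle : s a.succ ≤ s b.castSucc := hsmono.monotone (by
        rw [Fin.le_def, Fin.val_succ, Fin.coe_castSucc]
        exact hab)
      rw [Set.disjoint_left]
      rintro r ⟨_, hr2⟩ ⟨hr3, _⟩
      linarith
    rcases lt_or_gt_of_ne hij with h | h
    · exact key i j h
    · exact (key j i h).symm
  have hsumIoo : ∑ i : Fin m, volume.restrict E (Ioo (s i.castSucc) (s i.succ)) ≤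
      volume.restrict E (Ioo u v) := by
    rw [← measure_biUnion_finset hdisj (fun i _ => measurableSet_Ioo)]
    apply measure_mono
    intro r hr
    simp only [Finset.mem_coe, mem_iUnion] at hr
    obtain ⟨i, _, hri⟩ := hr
    exact ⟨lt_of_le_of_lt (hsl i.castSucc) hri.1, lt_of_lt_of_le hri.2 (hsu i.succ)⟩
  have hsum0 : ∑ i : Fin m, (if (i:ℕ) = 0 then ENNReal.ofReal M else 0) =
      ENNReal.ofReal M := by
    have h := Finset.sum_eq_single_of_mem (s := Finset.univ)
      (f := fun i : Fin m => if (i:ℕ) = 0 then ENNReal.ofReal M else 0)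
      (⟨0, hm⟩ : Fin m) (Finset.mem_univ _)
      (fun b _ hb => if_neg (fun h => hb (Fin.ext h)))
    rw [h]
    exact if_pos rfl
  have hsumlast : ∑ i : Fin m, (if (i:ℕ)+1 = m then ENNReal.ofReal M else 0) =
      ENNReal.ofReal M := by
    have h := Finset.sum_eq_single_of_mem (s := Finset.univ)
      (f := fun i : Fin m => if (i:ℕ)+1 = m then ENNReal.ofReal M else 0)
      (⟨m-1, by omega⟩ : Fin m) (Finset.mem_univ _)
      (fun b _ hb => if_neg (fun h => hb (Fin.ext (show (b:ℕ) = m-1 by omega))))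
    rw [h]
    exact if_pos (show (m-1)+1 = m by omega)
  have hsum : ∑ i : Fin m, volume (B i) ≤
      volume.restrict E (Ioo u v) + (ENNReal.ofReal M + ENNReal.ofReal M) := by
    calc ∑ i : Fin m, volume (B i) ≤
        ∑ i : Fin m, (volume.restrict E (Ioo (s i.castSucc) (s i.succ)) +
          ((if (i:ℕ) = 0 then ENNReal.ofReal M else 0) +
           (if (i:ℕ)+1 = m then ENNReal.ofReal M else 0))) :=
          Finset.sum_le_sum (fun i _ => hibound i)
    _ = (∑ i : Fin m, volume.restrict E (Ioo (s i.castSucc) (s i.succ))) +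
        ((∑ i : Fin m, (if (i:ℕ) = 0 then ENNReal.ofReal M else 0)) +
         (∑ i : Fin m, (if (i:ℕ)+1 = m then ENNReal.ofReal M else 0))) := by
          rw [Finset.sum_add_distrib, Finset.sum_add_distrib]
    _ ≤ volume.restrict E (Ioo u v) + (ENNReal.ofReal M + ENNReal.ofReal M) := by
          rw [hsum0, hsumlast]
          gcongr
  have hfinB : ∀ i : Fin m, volume (B i) ≠ ⊤ := by
    intro i
    have : B i ⊆ Icc (s i.castSucc) (s i.succ) := fun r hr => hr.1
    refine ne_top_of_le_ne_top ?_ (measure_mono this)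
    rw [Real.volume_Icc]
    exact ENNReal.ofReal_ne_top
  have hfinR : volume.restrict E (Ioo u v) ≠ ⊤ := by
    rw [Measure.restrict_apply measurableSet_Ioo]
    refine ne_top_of_le_ne_top ?_ (measure_mono inter_subset_left)
    rw [Real.volume_Ioo]
    exact ENNReal.ofReal_ne_top
  have hMM : ENNReal.ofReal M + ENNReal.ofReal M ≠ ⊤ :=
    ENNReal.add_ne_top.2 ⟨ENNReal.ofReal_ne_top, ENNReal.ofReal_ne_top⟩
  have hRHSfin : volume.restrict E (Ioo u v) + (ENNReal.ofReal M + ENNReal.ofReal M) ≠ ⊤ :=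
    ENNReal.add_ne_top.2 ⟨hfinR, hMM⟩
  rw [htau, ← ENNReal.toReal_sum (fun i _ => hfinB i)]
  have := ENNReal.toReal_mono hRHSfin hsum
  rw [ENNReal.toReal_add hfinR hMM,
    ENNReal.toReal_add ENNReal.ofReal_ne_top ENNReal.ofReal_ne_top,
    ENNReal.toReal_ofReal (le_of_lt hM)] at this
  linarith

end Aux3
section Aux4

variable {d : ℕ}

/-- The free (uncovered) portion of segment `q` of the path, in arc-length time. -/
def segSet (ξ : Config d) (n : ℕ) (x : Fin (n+1) → Euc d) (q : Fin n) : Set ℝ :=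
  {r : ℝ | r ∈ Icc (cumLen n x q) (cumLen n x ((q:ℕ)+1)) ∧
    pathParam n x r ∉ Metric.ball (x q.castSucc) (leftR ξ x q) ∪
      Metric.ball (x q.succ) (rightR ξ x q)}

/-- The total free set of the path in arc-length time (interiors of segments only). -/
def bigE (ξ : Config d) (n : ℕ) (x : Fin (n+1) → Euc d) : Set ℝ :=
  ⋃ q : Fin n, (segSet ξ n x q ∩ Ioo (cumLen n x (q:ℕ)) (cumLen n x ((q:ℕ)+1)))

lemma bigE_mem (ξ : Config d) (n : ℕ) (x : Fin (n+1) → Euc d) :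
    ∀ p, ∀ hp : p < n, ∀ r : ℝ, cumLen n x p < r → r < cumLen n x (p+1) →
      pathParam n x r ∉ Metric.ball (clampPt n x p) (leftR ξ x ⟨p, hp⟩) ∪
        Metric.ball (clampPt n x (p+1)) (rightR ξ x ⟨p, hp⟩) → r ∈ bigE ξ n x := by
  intro p hp r h1 h2 hR
  unfold bigE
  refine mem_iUnion.2 ⟨⟨p, hp⟩, ⟨⟨le_of_lt h1, le_of_lt h2⟩, ?_⟩, h1, h2⟩
  rw [clampPt_castSucc n x ⟨p, hp⟩, clampPt_succ' n x ⟨p, hp⟩]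
  exact hR

lemma segSet_vol_ne_top (ξ : Config d) (n : ℕ) (x : Fin (n+1) → Euc d) (q : Fin n) :
    volume (segSet ξ n x q) ≠ ⊤ := by
  refine ne_top_of_le_ne_top ?_ (measure_mono (fun r hr => hr.1))
  rw [Real.volume_Icc]
  exact ENNReal.ofReal_ne_top

lemma bigE_le (ξ : Config d) (n : ℕ) (x : Fin (n+1) → Euc d) :
    volume (bigE ξ n x) ≤ ∑ q : Fin n, volume (segSet ξ n x q) := by
  unfold bigE
  refine le_trans (measure_iUnion_le _) ?_
  rw [tsum_fintype]
  exact Finset.sum_le_sum (fun q _ => measure_mono inter_subset_left)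

lemma pathLocTau_eq_sum_vol (ξ : Config d) (n : ℕ) (x : Fin (n+1) → Euc d)
    (hinj : Function.Injective x) :
    pathLocTau ξ n x = ∑ q : Fin n, (volume (segSet ξ n x q)).toReal := by
  unfold pathLocTau
  refine Finset.sum_congr rfl (fun q _ => ?_)
  have hq1 : cumLen n x (q:ℕ) < cumLen n x ((q:ℕ)+1) :=
    cumLen_lt n x hinj (q:ℕ) ((q:ℕ)+1) (by omega) q.isLt
  have hK := locSegTau_eq_vol n x hinj (q:ℕ) q.isLt _ _ hq1 le_rfl le_rfl
    (leftR ξ x q) (rightR ξ x q)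
  rw [pathParam_cumLen n x hinj (q:ℕ) (le_of_lt q.isLt),
    pathParam_cumLen n x hinj ((q:ℕ)+1) q.isLt,
    ← clampPt_castSucc n x q, ← clampPt_succ' n x q] at hK
  rw [hK]
  rfl

end Aux4

/-- Let M > 0 and let ξ be a configuration all of whose radii are at most M.
Let ρ > 0, let π be a path starting at 0 whose ρ-skeleton construction produces the times
t_0 < … < t_k with k ≥ 1, and let γ^1, …, γ^k be the sub-paths obtained by cutting the
arc-length parametrized curve π at each t_i and discarding the part of π after time t_k.
Then τ̃(π;ξ) ≥ Σ_{j=1}^k τ̃(γ^j;ξ) − 2Mk. -/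
theorem stmt3 {d : ℕ} (hd : 2 ≤ d) (M : ℝ) (hM : 0 < M)
    (ξ : Config d) (hrad : ∀ c, ξ.radius c ≤ M)
    (ρ : ℝ) (hρ : 0 < ρ)
    (n : ℕ) (x : Fin (n+1) → Euc d) (hinj : Function.Injective x) (hx0 : x 0 = 0)
    (k : ℕ) (hk : 1 ≤ k) (a : ℕ → Euc d) (t : ℕ → ℝ)
    (hsk : IsSkeleton n x ρ k a t)
    (m : ℕ → ℕ) (y : (j : ℕ) → Fin (m j + 1) → Euc d)
    (hcut : ∀ j, 1 ≤ j → j ≤ k → IsCut n x (t (j-1)) (t j) (m j) (y j)) :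
    pathLocTau ξ n x ≥ (∑ j ∈ Finset.Icc 1 k, pathLocTau ξ (m j) (y j)) - 2 * M * k := by
  classical
  set E : Set ℝ := bigE ξ n x with hEdef
  have hkey : ∀ j ∈ Finset.Icc 1 k, pathLocTau ξ (m j) (y j) ≤
      (volume.restrict E (Ioo (t (j-1)) (t j))).toReal + M + M := by
    intro j hj
    rw [Finset.mem_Icc] at hj
    have hu0 : 0 ≤ t (j-1) := (hsk.t_mem (j-1) (by omega)).1
    have huv : t (j-1) < t j := by
      have h := hsk.t_mono (j-1) (by omega)
      rwa [show j - 1 + 1 = j by omega] at h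
    have hvl : t j ≤ pathLen n x := (hsk.t_mem j hj.2).2
    exact cut_bound ξ M hM hrad n x hinj _ _ hu0 huv hvl (m j) (y j)
      (hcut j hj.1 hj.2) E (bigE_mem ξ n x)
  have tmono : ∀ a b, a ≤ b → b ≤ k → t a ≤ t b := by
    intro a b hab hbk
    induction b with
    | zero =>
      have ha0 : a = 0 := by omega
      rw [ha0]
    | succ b ih =>
      rcases Nat.lt_or_ge a (b+1) with h | h
      · have h1 : t a ≤ t b := ih (by omega) (by omega)
        have h2 : t b < t (b+1) := hsk.t_mono b (by omega)
        linarith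
      · have hab1 : a = b+1 := by omega
        rw [hab1]
  have hkdisj : ((Finset.Icc 1 k : Finset ℕ) : Set ℕ).PairwiseDisjoint
      (fun j => Ioo (t (j-1)) (t j)) := by
    intro a ha b hb hab
    simp only [Finset.coe_Icc, mem_Icc] at ha hb
    have key : ∀ a b : ℕ, 1 ≤ a → a ≤ k → 1 ≤ b → b ≤ k → a < b →
        Disjoint (Ioo (t (a-1)) (t a)) (Ioo (t (b-1)) (t b)) := by
      intro a b ha1 hak hb1 hbk hlt
      have hle : t a ≤ t (b-1) := tmono a (b-1) (by omega) (by omega)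
      rw [Set.disjoint_left]
      rintro r ⟨_, h2⟩ ⟨h3, _⟩
      linarith
    rcases lt_or_gt_of_ne hab with h | h
    · exact key a b ha.1 ha.2 hb.1 hb.2 h
    · exact (key b a hb.1 hb.2 ha.1 ha.2 h).symm
  have hsumν : ∑ j ∈ Finset.Icc 1 k, volume.restrict E (Ioo (t (j-1)) (t j)) ≤
      volume E := by
    calc ∑ j ∈ Finset.Icc 1 k, volume.restrict E (Ioo (t (j-1)) (t j))
        = volume.restrict E (⋃ j ∈ Finset.Icc 1 k, Ioo (t (j-1)) (t j)) :=
          (measure_biUnion_finset hkdisj (fun _ _ => measurableSet_Ioo)).symm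
    _ ≤ volume.restrict E univ := measure_mono (subset_univ _)
    _ = volume E := Measure.restrict_apply_univ _
  have hfinsum : (∑ q : Fin n, volume (segSet ξ n x q)) ≠ ⊤ := by
    refine (ENNReal.sum_lt_top.2 (fun q _ => ?_)).ne
    exact lt_top_iff_ne_top.2 (segSet_vol_ne_top ξ n x q)
  have hEfin : volume E ≠ ⊤ := ne_top_of_le_ne_top hfinsum (bigE_le ξ n x)
  have hνfin : ∀ j, volume.restrict E (Ioo (t (j-1)) (t j)) ≠ ⊤ := by
    intro j
    rw [Measure.restrict_apply measurableSet_Ioo]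
    refine ne_top_of_le_ne_top ?_ (measure_mono inter_subset_left)
    rw [Real.volume_Ioo]
    exact ENNReal.ofReal_ne_top
  have hA : (∑ j ∈ Finset.Icc 1 k, volume.restrict E (Ioo (t (j-1)) (t j))).toReal ≤
      pathLocTau ξ n x := by
    rw [pathLocTau_eq_sum_vol ξ n x hinj, ← ENNReal.toReal_sum (fun q _ => segSet_vol_ne_top ξ n x q)]
    exact ENNReal.toReal_mono hfinsum (le_trans hsumν (bigE_le ξ n x))
  have hS : ∑ j ∈ Finset.Icc 1 k, pathLocTau ξ (m j) (y j) ≤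
      (∑ j ∈ Finset.Icc 1 k, volume.restrict E (Ioo (t (j-1)) (t j))).toReal +
        (k:ℝ) * (M + M) := by
    calc ∑ j ∈ Finset.Icc 1 k, pathLocTau ξ (m j) (y j)
        ≤ ∑ j ∈ Finset.Icc 1 k,
            ((volume.restrict E (Ioo (t (j-1)) (t j))).toReal + M + M) :=
          Finset.sum_le_sum hkey
    _ = (∑ j ∈ Finset.Icc 1 k, (volume.restrict E (Ioo (t (j-1)) (t j))).toReal) +
          (k:ℝ) * (M + M) := by
        rw [show (fun j => (volume.restrict E (Ioo (t (j-1)) (t j))).toReal + M + M) =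
          (fun j => (volume.restrict E (Ioo (t (j-1)) (t j))).toReal + (M + M)) from
            funext (fun j => by ring)]
        rw [Finset.sum_add_distrib, Finset.sum_const, Nat.card_Icc]
        simp only [nsmul_eq_mul]
        norm_num
    _ = (∑ j ∈ Finset.Icc 1 k, volume.restrict E (Ioo (t (j-1)) (t j))).toReal +
          (k:ℝ) * (M + M) := by
        rw [ENNReal.toReal_sum (fun j _ => hνfin j)]
  have hcast : (k:ℝ) * (M + M) = 2 * M * k := by ring
  linarith

end
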